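/- Let n, k ≥ 1 be integers, let P ⊆ ℝⁿ be a [0,k]-polytope, let c ∈ ℤⁿ, and let x⁰ be a vertex of P. Then there exists a sequence of vertices x⁰, x¹, …, x^N of P such that consecutive vertices are adjacent, cᵀx^{t+1} > cᵀx^t for every t, x^N maximizes cᵀx over P, and N ≤ n·k·‖c‖_∞. -/

import Mathlib

/-- A vertex of `P` is an extreme point of `P`. -/
def IsVertex {n : ℕ} (P : Set (Fin n → ℝ)) (x : Fin n → ℝ) : Prop :=
  x ∈ Set.extremePoints ℝ P

/-- Two distinct vertices are adjacent if the segment between them is a face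
(i.e. an extreme subset) of `P`. -/
def AdjacentVertices {n : ℕ} (P : Set (Fin n → ℝ)) (x y : Fin n → ℝ) : Prop :=
  x ≠ y ∧ IsVertex P x ∧ IsVertex P y ∧ IsExtreme ℝ P (segment ℝ x y)

/-- A `[0,k]`-polytope in `ℝⁿ`: the convex hull of a finite set, contained in the box
`[0,k]ⁿ`, all of whose vertices (extreme points) have integer coordinates. -/
def IsZeroKPolytope (n k : ℕ) (P : Set (Fin n → ℝ)) : Prop :=
  (∃ V : Set (Fin n → ℝ), V.Finite ∧ P = convexHull ℝ V) ∧
  (∀ x ∈ P, ∀ j, 0 ≤ x j ∧ x j ≤ (k : ℝ)) ∧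
  (∀ x, IsVertex P x → ∀ j, ∃ z : ℤ, x j = (z : ℝ))


section Aux
open Set

variable {n : ℕ}

noncomputable def dotCLM (y : Fin n → ℝ) : (Fin n → ℝ) →L[ℝ] ℝ :=
  ∑ j, y j • (ContinuousLinearMap.proj j : (Fin n → ℝ) →L[ℝ] ℝ)

lemma dotCLM_apply (y x : Fin n → ℝ) : dotCLM y x = ∑ j, y j * x j := by
  simp [dotCLM, smul_eq_mul]

lemma hull_le' (g : (Fin n → ℝ) →L[ℝ] ℝ) (V : Set (Fin n → ℝ)) (r : ℝ)
    (h : ∀ w ∈ V, g w ≤ r) : ∀ x ∈ convexHull ℝ V, g x ≤ r := by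
  intro x hx
  exact convexHull_min h (convex_halfSpace_le ⟨g.map_add, fun c x => g.map_smul c x⟩ r) hx

lemma extremePoint_of_subset' {C P : Set (Fin n → ℝ)} (hCP : C ⊆ P) {x}
    (hx : x ∈ Set.extremePoints ℝ P) (hxC : x ∈ C) : x ∈ Set.extremePoints ℝ C :=
  ⟨hxC, fun _ h₁ _ h₂ hseg => hx.2 (hCP h₁) (hCP h₂) hseg⟩

lemma extremePoints_subset_of_isExtreme' {F P : Set (Fin n → ℝ)} (h : IsExtreme ℝ P F) :
    Set.extremePoints ℝ F ⊆ Set.extremePoints ℝ P := fun _ hx =>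
  isExtreme_singleton.mp (h.trans (isExtreme_singleton.mpr hx))

lemma hull_of_extreme {P : Set (Fin n → ℝ)} (hc : IsCompact P) (hv : Convex ℝ P)
    (hf : (Set.extremePoints ℝ P).Finite) : P = convexHull ℝ (Set.extremePoints ℝ P) := by
  have h := closure_convexHull_extremePoints hc hv
  rw [(hf.isClosed_convexHull ℝ).closure_eq] at h
  exact h.symm

lemma sep_functional {P : Set (Fin n → ℝ)}
    (hf : (Set.extremePoints ℝ P).Finite)
    (hPE : P = convexHull ℝ (Set.extremePoints ℝ P))
    {v : Fin n → ℝ} (hv : v ∈ Set.extremePoints ℝ P) :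
    ∃ f : (Fin n → ℝ) →L[ℝ] ℝ, ∀ w ∈ Set.extremePoints ℝ P, w ≠ v → f w < f v := by
  have hvnot : v ∉ convexHull ℝ (Set.extremePoints ℝ P \ {v}) := by
    intro hmem
    have hsub : convexHull ℝ (Set.extremePoints ℝ P \ {v}) ⊆ P := by
      have := convexHull_mono (𝕜 := ℝ) (diff_subset : Set.extremePoints ℝ P \ {v} ⊆ Set.extremePoints ℝ P)
      rwa [← hPE] at this
    exact (extremePoints_convexHull_subset (extremePoint_of_subset' hsub hv hmem)).2 rfl
  obtain ⟨f, u, hfu, hufv⟩ := geometric_hahn_banach_closed_point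
    (convex_convexHull ℝ _) ((hf.subset diff_subset).isClosed_convexHull ℝ) hvnot
  exact ⟨f, fun w hw hwv => lt_trans (hfu w (subset_convexHull ℝ _ ⟨hw, hwv⟩)) hufv⟩

lemma pivot (P : Set (Fin n → ℝ)) (hc : IsCompact P) (hconv : Convex ℝ P)
    (hfin : (Set.extremePoints ℝ P).Finite)
    (hPE : P = convexHull ℝ (Set.extremePoints ℝ P))
    (f h : (Fin n → ℝ) →L[ℝ] ℝ) {v : Fin n → ℝ} (hv : v ∈ Set.extremePoints ℝ P)
    (hsep : ∀ w ∈ Set.extremePoints ℝ P, w ≠ v → f w < f v)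
    {w1 : Fin n → ℝ} (hw1 : w1 ∈ Set.extremePoints ℝ P) (hw1h : h v < h w1) :
    ∃ (t : ℝ) (F : Set (Fin n → ℝ)), 0 < t ∧
      F = {x ∈ P | f x + t * h x = f v + t * h v} ∧
      IsExtreme ℝ P F ∧ IsCompact F ∧ Convex ℝ F ∧
      Set.extremePoints ℝ F ⊆ Set.extremePoints ℝ P ∧
      (Set.extremePoints ℝ F).Finite ∧
      v ∈ Set.extremePoints ℝ F ∧
      (∃ w ∈ Set.extremePoints ℝ F, h v < h w) := by
  classical
  set E := Set.extremePoints ℝ P with hE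
  set s : Finset (Fin n → ℝ) := hfin.toFinset.filter (fun w => h v < h w) with hs
  have hw1s : w1 ∈ s := by
    simp only [hs, Finset.mem_filter, Set.Finite.mem_toFinset]
    exact ⟨hw1, hw1h⟩
  have hsne : s.Nonempty := ⟨w1, hw1s⟩
  set d : (Fin n → ℝ) → ℝ := fun w => (f v - f w) / (h w - h v) with hd
  set t : ℝ := s.inf' hsne d with ht
  have hmem : ∀ w ∈ s, w ∈ E ∧ h v < h w := by
    intro w hw
    simpa only [hs, Finset.mem_filter, Set.Finite.mem_toFinset] using hw
  have hdpos : ∀ w ∈ s, 0 < d w := by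
    intro w hw
    obtain ⟨hwE, hwh⟩ := hmem w hw
    have hne : w ≠ v := by rintro rfl; exact lt_irrefl _ hwh
    exact div_pos (sub_pos.mpr (hsep w hwE hne)) (sub_pos.mpr hwh)
  have htpos : 0 < t := by
    rw [ht, Finset.lt_inf'_iff]
    exact hdpos
  obtain ⟨wstar, hwstar_s, hwstar_eq⟩ := Finset.exists_mem_eq_inf' hsne d
  set G : (Fin n → ℝ) →L[ℝ] ℝ := f + t • h with hG
  have hGapp : ∀ x, G x = f x + t * h x := fun x => by
    simp [hG, smul_eq_mul]
  have hEmax : ∀ w ∈ E, G w ≤ G v := by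
    intro w hw
    rcases eq_or_ne w v with rfl | hne
    · exact le_rfl
    · rcases le_or_gt (h w) (h v) with hh | hh
      · rw [hGapp, hGapp]
        have h1 : f w < f v := hsep w hw hne
        nlinarith [htpos]
      · have hws : w ∈ s := by
          simp only [hs, Finset.mem_filter, Set.Finite.mem_toFinset]; exact ⟨hw, hh⟩
        have : t ≤ d w := by rw [ht]; exact Finset.inf'_le d hws
        rw [hGapp, hGapp]
        have h2 : 0 < h w - h v := sub_pos.mpr hh
        rw [hd] at this
        have := (le_div_iff₀ h2).mp this
        linarith
  have hPmax : ∀ x ∈ P, G x ≤ G v := by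
    intro x hx
    rw [hPE] at hx
    exact hull_le' G E (G v) hEmax x hx
  set F : Set (Fin n → ℝ) := {x ∈ P | f x + t * h x = f v + t * h v} with hF
  have hFG : F = {x ∈ P | G x = G v} := by
    ext x; simp [hF, hGapp]
  have hvF : v ∈ F := ⟨hv.1, rfl⟩
  have hwstarF : wstar ∈ F := by
    obtain ⟨hwE, hwh⟩ := hmem wstar hwstar_s
    refine ⟨hwE.1, ?_⟩
    have h2 : h wstar - h v ≠ 0 := ne_of_gt (sub_pos.mpr hwh)
    have ht2 : t = (f v - f wstar) / (h wstar - h v) := hwstar_eq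
    have : t * (h wstar - h v) = f v - f wstar := by
      rw [ht2]; field_simp
    linarith [this]
  have hexp : IsExposed ℝ P F := by
    intro _
    refine ⟨G, ?_⟩
    rw [hFG]
    ext x
    constructor
    · rintro ⟨hxP, hxeq⟩
      exact ⟨hxP, fun y hy => (hPmax y hy).trans (le_of_eq hxeq.symm)⟩
    · rintro ⟨hxP, hxmax⟩
      exact ⟨hxP, le_antisymm (hPmax x hxP) (hxmax v hv.1)⟩
  have hext : IsExtreme ℝ P F := hexp.isExtreme
  have hFclosed : IsClosed F := by
    rw [hFG]
    have : {x ∈ P | G x = G v} = P ∩ G ⁻¹' {G v} := by ext x; simp [Set.mem_preimage]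
    rw [this]
    exact IsClosed.inter hc.isClosed (IsClosed.preimage G.continuous isClosed_singleton)
  have hFcomp : IsCompact F := hc.of_isClosed_subset hFclosed hext.1
  have hFconv : Convex ℝ F := hexp.convex hconv
  have hFsub : Set.extremePoints ℝ F ⊆ E := extremePoints_subset_of_isExtreme' hext
  exact ⟨t, F, htpos, rfl, hext, hFcomp, hFconv, hFsub, hfin.subset hFsub,
    extremePoint_of_subset' hext.1 hv hvF, wstar,
    extremePoint_of_subset' hext.1 (hmem wstar hwstar_s).1 hwstarF, (hmem wstar hwstar_s).2⟩

/-- Key lemma: a vertex which is not optimal for the linear functional `g` has an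
adjacent vertex with strictly larger `g`-value. -/
lemma key : ∀ (m : ℕ) (P : Set (Fin n → ℝ)), IsCompact P → Convex ℝ P →
    (Set.extremePoints ℝ P).Finite → (Set.extremePoints ℝ P).ncard ≤ m →
    ∀ (g : (Fin n → ℝ) →L[ℝ] ℝ) (v : Fin n → ℝ), v ∈ Set.extremePoints ℝ P →
    ∀ u ∈ P, g v < g u →
    ∃ w ∈ Set.extremePoints ℝ P, g v < g w ∧ IsExtreme ℝ P (segment ℝ v w) := by
  intro m
  induction m with
  | zero =>
    intro P _ _ hfin hcard _ v hv _ _ _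
    have : 0 < (Set.extremePoints ℝ P).ncard := (Set.ncard_pos hfin).mpr ⟨v, hv⟩
    omega
  | succ m ih =>
    intro P hc hconv hfin hcard g v hv u hu hgu
    classical
    have hPE := hull_of_extreme hc hconv hfin
    have finish : ∀ F, IsExtreme ℝ P F → IsCompact F → Convex ℝ F →
        Set.extremePoints ℝ F ⊆ Set.extremePoints ℝ P → (Set.extremePoints ℝ F).Finite →
        v ∈ Set.extremePoints ℝ F → F ≠ P →
        (∃ w ∈ Set.extremePoints ℝ F, g v < g w) →
        ∃ w ∈ Set.extremePoints ℝ P, g v < g w ∧ IsExtreme ℝ P (segment ℝ v w) := by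
      rintro F hext hFc hFconv hFsub hFfin hvF hFP ⟨w0, hw0F, hgw0⟩
      have hstrict : Set.extremePoints ℝ F ⊂ Set.extremePoints ℝ P := by
        refine ⟨hFsub, fun hsup => hFP ?_⟩
        have hPF : P ⊆ F := by
          rw [hPE]
          exact convexHull_min (fun x hx => (hsup hx).1) hFconv
        exact Set.Subset.antisymm hext.1 hPF
      have hcard' : (Set.extremePoints ℝ F).ncard ≤ m := by
        have h1 := Set.ncard_lt_ncard hstrict hfin
        omega
      obtain ⟨w, hwF, hgw, hseg⟩ := ih F hFc hFconv hFfin hcard' g v hvF w0 hw0F.1 hgw0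
      exact ⟨w, hFsub hwF, hgw, hext.trans hseg⟩
    -- a g-maximal vertex
    have hne : hfin.toFinset.Nonempty := ⟨v, hfin.mem_toFinset.mpr hv⟩
    obtain ⟨w1, hw1m, hw1eq⟩ := Finset.exists_mem_eq_sup' hne g
    have hw1E : w1 ∈ Set.extremePoints ℝ P := hfin.mem_toFinset.mp hw1m
    have hw1max : ∀ x ∈ P, g x ≤ g w1 := by
      intro x hx
      rw [hPE] at hx
      refine hull_le' g _ (g w1) (fun w hw => ?_) x hx
      rw [← hw1eq]
      exact Finset.le_sup' g (hfin.mem_toFinset.mpr hw)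
    have hgv1 : g v < g w1 := lt_of_lt_of_le hgu (hw1max u hu)
    obtain ⟨f, hsep⟩ := sep_functional hfin hPE hv
    obtain ⟨t, F, htpos, hFdef, hext, hFc, hFconv, hFsub, hFfin, hvF, wstar, hwstarF, hgwstar⟩ :=
      pivot P hc hconv hfin hPE f g hv hsep hw1E hgv1
    by_cases hFP : F = P
    swap
    · exact finish F hext hFc hFconv hFsub hFfin hvF hFP ⟨wstar, hwstarF, hgwstar⟩
    -- F = P : every other vertex strictly improves g
    have himp : ∀ w ∈ Set.extremePoints ℝ P, w ≠ v → g v < g w := by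
      intro w hw hne'
      have hwF : w ∈ F := hFP ▸ hw.1
      rw [hFdef] at hwF
      have heq := hwF.2
      have hlt := hsep w hw hne'
      nlinarith
    set S : (Fin n → ℝ) → (Fin n → ℝ) → ℝ := fun a b => ∑ j, (a j - v j) * (b j - v j) with hS
    by_cases hall : ∀ w0 ∈ Set.extremePoints ℝ P, w0 ≠ v →
        ∃ t' > 0, ∀ x ∈ P, f v - f x = t' * S w0 x
    swap
    · push_neg at hall
      obtain ⟨w0, hw0E, hw0ne, hnot⟩ := hall
      have hdots : ∀ x, (dotCLM (w0 - v)) x - (dotCLM (w0 - v)) v = S w0 x := by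
        intro x
        rw [dotCLM_apply, dotCLM_apply, hS, ← Finset.sum_sub_distrib]
        exact Finset.sum_congr rfl (fun j _ => by simp only [Pi.sub_apply]; ring)
      have hh0 : (dotCLM (w0 - v)) v < (dotCLM (w0 - v)) w0 := by
        have h1 := hdots w0
        have hpos : 0 < S w0 w0 := by
          obtain ⟨j0, hj0⟩ := Function.ne_iff.mp hw0ne
          rw [hS]
          refine Finset.sum_pos' (fun j _ => mul_self_nonneg _) ⟨j0, Finset.mem_univ _, ?_⟩
          exact mul_self_pos.mpr (sub_ne_zero.mpr hj0)
        linarith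
      obtain ⟨t', F', ht', hF'def, hext', hF'c, hF'conv, hF'sub, hF'fin, hvF', ws', hws'F', hws'h⟩ :=
        pivot P hc hconv hfin hPE f (dotCLM (w0 - v)) hv hsep hw0E hh0
      by_cases hF'P : F' = P
      · exfalso
        obtain ⟨x, hx, hneq⟩ := hnot t' ht'
        apply hneq
        have hxF : x ∈ F' := hF'P ▸ hx
        rw [hF'def] at hxF
        have heq := hxF.2
        have h2 := hdots x
        linear_combination -heq + t' * h2
      · have hws'E := hF'sub hws'F'
        have hws'ne : ws' ≠ v := by
          intro hcontra; rw [hcontra] at hws'h; exact lt_irrefl _ hws'h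
        exact finish F' hext' hF'c hF'conv hF'sub hF'fin hvF' hF'P
          ⟨ws', hws'F', himp ws' hws'E hws'ne⟩
    -- the collinear case: P is a segment
    · have hw1ne : w1 ≠ v := by
        intro hcontra; rw [hcontra] at hgv1; exact lt_irrefl _ hgv1
      have hprop : ∀ w ∈ Set.extremePoints ℝ P, w ≠ v → ∀ j,
          (f v - f w1) * (w j - v j) = (f v - f w) * (w1 j - v j) := by
        intro w hw hne' j
        obtain ⟨a, hapos, ha⟩ := hall w hw hne'
        obtain ⟨b, hbpos, hb⟩ := hall w1 hw1E hw1ne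
        have hwP : w ∈ P := hw.1
        have hw1P : w1 ∈ P := hw1E.1
        have r1 : f v - f w = a * S w w := ha w hwP
        have r2 : f v - f w1 = a * S w w1 := ha w1 hw1P
        have r3 : f v - f w = b * S w1 w := hb w hwP
        have r4 : f v - f w1 = b * S w1 w1 := hb w1 hw1P
        set α : ℝ := f v - f w with hα
        set β : ℝ := f v - f w1 with hβ
        have hQ : ∑ j, (β * (w j - v j) - α * (w1 j - v j))^2 =
            β^2 * S w w - α * β * S w w1 - α * β * S w1 w + α^2 * S w1 w1 := by
          simp only [hS]
          rw [Finset.mul_sum, Finset.mul_sum, Finset.mul_sum, Finset.mul_sum,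
            ← Finset.sum_sub_distrib, ← Finset.sum_sub_distrib, ← Finset.sum_add_distrib]
          exact Finset.sum_congr rfl (fun j _ => by ring)
        have hQ0 : (a * b) * (∑ j, (β * (w j - v j) - α * (w1 j - v j))^2) = 0 := by
          rw [hQ]
          linear_combination (-(b * β^2)) * r1 + (b * α * β) * r2 + (a * α * β) * r3 + (-(a * α^2)) * r4
        have hsum0 : ∑ j, (β * (w j - v j) - α * (w1 j - v j))^2 = 0 :=
          (mul_eq_zero.mp hQ0).resolve_left (ne_of_gt (mul_pos hapos hbpos))
        have hj := (Finset.sum_eq_zero_iff_of_nonneg (fun j _ => sq_nonneg _)).mp hsum0 j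
          (Finset.mem_univ j)
        have hz := pow_eq_zero_iff (two_ne_zero) |>.mp hj
        have := sub_eq_zero.mp hz
        linarith [this]
      have hα1pos : 0 < f v - f w1 := sub_pos.mpr (hsep w1 hw1E hw1ne)
      have hform : ∀ w ∈ Set.extremePoints ℝ P, w ≠ v → ∀ j,
          w j = v j + ((f v - f w)/(f v - f w1)) * (w1 j - v j) := by
        intro w hw hne' j
        have h2 := hprop w hw hne' j
        field_simp
        linarith [h2]
      set s' : Finset (Fin n → ℝ) := hfin.toFinset.filter (fun w => w ≠ v) with hs'
      have hw1s' : w1 ∈ s' := by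
        simp only [hs', Finset.mem_filter, Set.Finite.mem_toFinset]
        exact ⟨hw1E, hw1ne⟩
      obtain ⟨wmax, hwmaxs', hwmaxeq⟩ := Finset.exists_mem_eq_inf' ⟨w1, hw1s'⟩ f
      have hwmaxE : wmax ∈ Set.extremePoints ℝ P := by
        have := hwmaxs'
        simp only [hs', Finset.mem_filter, Set.Finite.mem_toFinset] at this
        exact this.1
      have hwmaxne : wmax ≠ v := by
        have := hwmaxs'
        simp only [hs', Finset.mem_filter, Set.Finite.mem_toFinset] at this
        exact this.2
      have hwmaxmin : ∀ w ∈ Set.extremePoints ℝ P, w ≠ v → f wmax ≤ f w := by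
        intro w hw hne'
        have hws' : w ∈ s' := by
          simp only [hs', Finset.mem_filter, Set.Finite.mem_toFinset]
          exact ⟨hw, hne'⟩
        rw [← hwmaxeq]
        exact Finset.inf'_le f hws'
      have hEsub : Set.extremePoints ℝ P ⊆ {v, wmax} := by
        intro w hw
        by_contra hcon
        simp only [Set.mem_insert_iff, Set.mem_singleton_iff, not_or] at hcon
        obtain ⟨hne1, hne2⟩ := hcon
        set lw : ℝ := (f v - f w)/(f v - f w1) with hlw
        set lm : ℝ := (f v - f wmax)/(f v - f w1) with hlm
        have hlwpos : 0 < lw := div_pos (sub_pos.mpr (hsep w hw hne1)) hα1pos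
        have hlmpos : 0 < lm := div_pos (sub_pos.mpr (hsep wmax hwmaxE hwmaxne)) hα1pos
        have hle : lw ≤ lm := by
          have hnum : f v - f w ≤ f v - f wmax := by
            have := hwmaxmin w hw hne1
            linarith
          exact (div_le_div_iff_of_pos_right hα1pos).mpr hnum
        have hltne : lw ≠ lm := by
          intro heq'
          apply hne2
          funext j
          rw [hform w hw hne1 j, hform wmax hwmaxE hwmaxne j, ← hlw, ← hlm, heq']
        have hlt : lw < lm := lt_of_le_of_ne hle hltne
        have hmem : w ∈ openSegment ℝ v wmax := by
          refine ⟨1 - lw/lm, lw/lm, ?_, div_pos hlwpos hlmpos, by ring, ?_⟩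
          · have : lw/lm < 1 := (div_lt_one hlmpos).mpr hlt
            linarith
          · funext j
            have e1 := hform w hw hne1 j
            have e2 := hform wmax hwmaxE hwmaxne j
            rw [← hlw] at e1
            rw [← hlm] at e2
            simp only [Pi.add_apply, Pi.smul_apply, smul_eq_mul]
            rw [e1, e2]
            field_simp
            ring
        have hcontr := hw.2 hv.1 hwmaxE.1 hmem
        exact hne1 hcontr.symm
      have hEeq : Set.extremePoints ℝ P = {v, wmax} := by
        apply Set.Subset.antisymm hEsub
        rintro x (rfl | rfl)
        · exact hv
        · exact hwmaxE
      have hPseg : P = segment ℝ v wmax := by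
        rw [hPE, hEeq, convexHull_pair]
      refine ⟨wmax, hwmaxE, himp wmax hwmaxE hwmaxne, ?_⟩
      have hrfl : IsExtreme ℝ P P := IsExtreme.rfl
      nth_rewrite 2 [hPseg] at hrfl
      exact hrfl

end Aux

theorem short_simplex_path_basic
    (n k : ℕ) (hn : 1 ≤ n) (hk : 1 ≤ k)
    (P : Set (Fin n → ℝ)) (hP : IsZeroKPolytope n k P)
    (c : Fin n → ℤ)
    (M : ℕ) (hM : M = Finset.univ.sup fun j => (c j).natAbs)
    (x0 : Fin n → ℝ) (hx0 : IsVertex P x0) :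
    ∃ (N : ℕ) (path : Fin (N + 1) → (Fin n → ℝ)),
      path 0 = x0 ∧
      (∀ t, IsVertex P (path t)) ∧
      (∀ t : Fin N, AdjacentVertices P (path t.castSucc) (path t.succ)) ∧
      (∀ t : Fin N,
        ∑ j, (c j : ℝ) * path t.castSucc j < ∑ j, (c j : ℝ) * path t.succ j) ∧
      (∀ x ∈ P, ∑ j, (c j : ℝ) * x j ≤ ∑ j, (c j : ℝ) * path (Fin.last N) j) ∧
      N ≤ n * k * M := by
  classical
  obtain ⟨⟨V, hVfin, hPV⟩, hbox, hint⟩ := hP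
  have hPc : IsCompact P := by rw [hPV]; exact hVfin.isCompact_convexHull ℝ
  have hPconv : Convex ℝ P := by rw [hPV]; exact convex_convexHull ℝ V
  have hEfin : (Set.extremePoints ℝ P).Finite := by
    refine hVfin.subset ?_
    rw [hPV]
    exact extremePoints_convexHull_subset
  have hPE : P = convexHull ℝ (Set.extremePoints ℝ P) := hull_of_extreme hPc hPconv hEfin
  have hx0' : x0 ∈ Set.extremePoints ℝ P := hx0
  set g : (Fin n → ℝ) →L[ℝ] ℝ := dotCLM (fun j => (c j : ℝ)) with hg
  have gapp : ∀ x, g x = ∑ j, (c j : ℝ) * x j := fun x => dotCLM_apply _ x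
  -- the maximum vertex
  have hne : hEfin.toFinset.Nonempty := ⟨x0, hEfin.mem_toFinset.mpr hx0'⟩
  obtain ⟨wtop, hwtopm, hwtopeq⟩ := Finset.exists_mem_eq_sup' hne g
  have hwtopE : wtop ∈ Set.extremePoints ℝ P := hEfin.mem_toFinset.mp hwtopm
  have hmax : ∀ x ∈ P, g x ≤ g wtop := by
    intro x hx
    rw [hPE] at hx
    refine hull_le' g _ (g wtop) (fun w hw => ?_) x hx
    rw [← hwtopeq]
    exact Finset.le_sup' g (hEfin.mem_toFinset.mpr hw)
  -- integrality of vertex values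
  have hint' : ∀ w, IsVertex P w → ∃ z : ℤ, (z : ℝ) = g w := by
    intro w hw
    choose z hz using hint w hw
    refine ⟨∑ j, c j * z j, ?_⟩
    rw [gapp]
    push_cast
    exact Finset.sum_congr rfl fun j _ => by rw [hz j]
  -- iterative construction
  have build : ∀ (b : ℕ) (v : Fin n → ℝ), IsVertex P v → g wtop - g v ≤ (b : ℝ) →
      ∃ N : ℕ, N ≤ b ∧ ∃ path : Fin (N + 1) → (Fin n → ℝ),
        path 0 = v ∧ (∀ t, IsVertex P (path t)) ∧
        (∀ t : Fin N, AdjacentVertices P (path t.castSucc) (path t.succ)) ∧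
        (∀ t : Fin N, g (path t.castSucc) < g (path t.succ)) ∧
        (∀ x ∈ P, g x ≤ g (path (Fin.last N))) := by
    intro b
    induction b with
    | zero =>
      intro v hv hgap
      refine ⟨0, le_rfl, fun _ => v, rfl, fun _ => hv, fun t => t.elim0, fun t => t.elim0, ?_⟩
      intro x hx
      have := hmax x hx
      simp only [Nat.cast_zero] at hgap
      linarith
    | succ b ihb =>
      intro v hv hgap
      by_cases hopt : ∀ x ∈ P, g x ≤ g v
      · exact ⟨0, Nat.zero_le _, fun _ => v, rfl, fun _ => hv, fun t => t.elim0,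
          fun t => t.elim0, hopt⟩
      · push_neg at hopt
        obtain ⟨u, hu, hgu⟩ := hopt
        obtain ⟨w, hwE, hgw, hseg⟩ :=
          key (Set.extremePoints ℝ P).ncard P hPc hPconv hEfin le_rfl g v hv u hu hgu
        obtain ⟨zv, hzv⟩ := hint' v hv
        obtain ⟨zw, hzw⟩ := hint' w hwE
        have hone : g v + 1 ≤ g w := by
          have hlt : zv < zw := by
            have : (zv : ℝ) < (zw : ℝ) := by rw [hzv, hzw]; exact hgw
            exact_mod_cast this
          have h1 : (zv : ℝ) + 1 ≤ (zw : ℝ) := by exact_mod_cast hlt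
          rw [hzv, hzw] at h1
          exact h1
        have hgap' : g wtop - g w ≤ (b : ℝ) := by
          push_cast at hgap ⊢
          linarith
        obtain ⟨N', hN', path', h0', hvert', hadj', hmono', hlast'⟩ := ihb w hwE hgap'
        have hvw : v ≠ w := fun hvw => by rw [hvw] at hgw; exact lt_irrefl _ hgw
        refine ⟨N' + 1, by omega, Fin.cons v path', Fin.cons_zero _ _, ?_, ?_, ?_, ?_⟩
        · intro t
          refine Fin.cases ?_ ?_ t
          · simpa using hv
          · intro i
            rw [Fin.cons_succ]
            exact hvert' i
        · intro t
          refine Fin.cases ?_ ?_ t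
          · have e1 : (Fin.cons v path' : Fin (N' + 2) → (Fin n → ℝ))
                (Fin.castSucc (0 : Fin (N' + 1))) = v := by simp
            have e2 : (Fin.cons v path' : Fin (N' + 2) → (Fin n → ℝ))
                (Fin.succ (0 : Fin (N' + 1))) = path' 0 := Fin.cons_succ _ _ _
            rw [e1, e2, h0']
            exact ⟨hvw, hv, hwE, hseg⟩
          · intro i
            rw [← Fin.succ_castSucc, Fin.cons_succ, Fin.cons_succ]
            exact hadj' i
        · intro t
          refine Fin.cases ?_ ?_ t
          · have e1 : (Fin.cons v path' : Fin (N' + 2) → (Fin n → ℝ))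
                (Fin.castSucc (0 : Fin (N' + 1))) = v := by simp
            have e2 : (Fin.cons v path' : Fin (N' + 2) → (Fin n → ℝ))
                (Fin.succ (0 : Fin (N' + 1))) = path' 0 := Fin.cons_succ _ _ _
            rw [e1, e2, h0']
            exact hgw
          · intro i
            rw [← Fin.succ_castSucc, Fin.cons_succ, Fin.cons_succ]
            exact hmono' i
        · intro x hx
          rw [← Fin.succ_last, Fin.cons_succ]
          exact hlast' x hx
  -- bound the gap
  have hgap0 : g wtop - g x0 ≤ ((n * k * M : ℕ) : ℝ) := by
    have hcj : ∀ j, |(c j : ℝ)| ≤ (M : ℝ) := by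
      intro j
      have h1 : (c j).natAbs ≤ M := by
        rw [hM]; exact Finset.le_sup (f := fun j => (c j).natAbs) (Finset.mem_univ j)
      calc |(c j : ℝ)| = ((c j).natAbs : ℝ) := by
            simp [Nat.cast_natAbs]
        _ ≤ (M : ℝ) := by exact_mod_cast h1
    have hwtopP : wtop ∈ P := hwtopE.1
    have hx0P : x0 ∈ P := hx0'.1
    have hcoord : ∀ j, |wtop j - x0 j| ≤ (k : ℝ) := by
      intro j
      obtain ⟨h1, h2⟩ := hbox wtop hwtopP j
      obtain ⟨h3, h4⟩ := hbox x0 hx0P j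
      rw [abs_le]
      constructor <;> linarith
    calc g wtop - g x0 = ∑ j, (c j : ℝ) * (wtop j - x0 j) := by
          rw [gapp, gapp, ← Finset.sum_sub_distrib]
          exact Finset.sum_congr rfl fun j _ => by ring
      _ ≤ ∑ j, |(c j : ℝ) * (wtop j - x0 j)| := Finset.sum_le_sum fun j _ => le_abs_self _
      _ ≤ ∑ _j : Fin n, (M : ℝ) * (k : ℝ) := by
          refine Finset.sum_le_sum fun j _ => ?_
          rw [abs_mul]
          exact mul_le_mul (hcj j) (hcoord j) (abs_nonneg _) (Nat.cast_nonneg M)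
      _ = (n : ℝ) * ((M : ℝ) * (k : ℝ)) := by
          rw [Finset.sum_const, Finset.card_univ, Fintype.card_fin, nsmul_eq_mul]
      _ = ((n * k * M : ℕ) : ℝ) := by push_cast; ring
  obtain ⟨N, hN, path, h0, hvert, hadj, hmono, hlast⟩ := build (n * k * M) x0 hx0 hgap0
  refine ⟨N, path, h0, hvert, hadj, ?_, ?_, hN⟩
  · intro t
    have := hmono t
    rw [gapp, gapp] at this
    exact this
  · intro x hx
    have := hlast x hx
    rw [gapp, gapp] at this
    exact this
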